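/- Let v_1,…,v_n be unit vectors in ℝ^d and w_1,…,w_n real weights summing to 1. Then Σ_j Σ_k w_j w_k ⟨v_j,v_k⟩^m ≥ b_m(ℝ^d), where b_m(ℝ^d) = ∫_S ∫_S ⟨x,y⟩^m dσ dσ, with equality if and only if the integration rule Σ_j w_j p(v_j) = ∫_S p dσ holds for every homogeneous polynomial p of degree m on ℝ^d. -/

import Mathlib

open MeasureTheory

noncomputable def sphericalMoment (d m : ℕ) : ℝ :=
  if Odd m then 0 else
    (∏ i ∈ Finset.range (m / 2), (2 * i + 1 : ℝ)) /
    (∏ i ∈ Finset.range (m / 2), ((d : ℝ) + 2 * i))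

namespace WHDaux

open Polynomial

/-! ### Polynomial coefficient computations -/

theorem expand_one_sub_sq (k : ℕ) :
    ((1 : ℝ[X]) - X^2)^k = ∑ i ∈ Finset.range (k+1), C ((-1:ℝ)^i * (k.choose i)) * X^(2*i) := by
  rw [sub_eq_add_neg, add_comm, add_pow]
  apply Finset.sum_congr rfl
  intro i hi
  simp only [map_mul, map_pow, map_neg, map_one, map_natCast]
  rw [one_pow, neg_pow, ← pow_mul]
  ring

theorem coeff_one_sub_sq (k n : ℕ) :
    (((1 : ℝ[X]) - X^2)^k).coeff n =
      if n % 2 = 0 ∧ n/2 ≤ k then (-1:ℝ)^(n/2) * (k.choose (n/2)) else 0 := by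
  rw [expand_one_sub_sq, Polynomial.finset_sum_coeff]
  simp only [Polynomial.coeff_C_mul, Polynomial.coeff_X_pow, mul_ite, mul_one, mul_zero]
  by_cases hpar : n % 2 = 0 ∧ n/2 ≤ k
  · rw [if_pos hpar, Finset.sum_eq_single (n/2)]
    · rw [if_pos (by omega)]
    · intro b hb hbne
      rw [if_neg (by omega)]
    · intro h
      exact absurd (Finset.mem_range.mpr (by omega)) h
  · rw [if_neg hpar]
    apply Finset.sum_eq_zero
    intro i hi
    have hik := Finset.mem_range.mp hi
    rw [if_neg (by omega)]

theorem expand_one_add_sq (k : ℕ) :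
    ((1 : ℝ[X]) + X^2)^k = ∑ i ∈ Finset.range (k+1), C ((k.choose i : ℝ)) * X^(2*i) := by
  rw [add_comm, add_pow]
  apply Finset.sum_congr rfl
  intro i hi
  simp only [map_natCast, one_pow, ← pow_mul]
  ring

theorem coeff_two_one_add_sq (k : ℕ) (hk : 1 ≤ k) :
    (((1 : ℝ[X]) + X^2)^k).coeff 2 = (k : ℝ) := by
  rw [expand_one_add_sq, Polynomial.finset_sum_coeff]
  simp only [Polynomial.coeff_C_mul, Polynomial.coeff_X_pow, mul_ite, mul_one, mul_zero]
  rw [Finset.sum_eq_single 1]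
  · simp
  · intro b hb hbne; rw [if_neg (by omega)]
  · intro h; exact absurd (Finset.mem_range.mpr (by omega)) h

theorem term_coeff (M k : ℕ) (hM : 2 ≤ M) (hkM : k ≤ M) (Mk : ℕ → ℝ) :
    (M.choose k : ℝ) * Mk k * ((((1:ℝ[X]) - X^2)^k * (C 2 * X)^(M-k)).coeff 2)
      = ((if k = M then -(M:ℝ) * Mk M else 0)
        + (if k = M-2 then 2*(M:ℝ)*((M:ℝ)-1)*Mk (M-2) else 0)) := by
  rw [mul_pow, ← map_pow, show ((1 - X^2)^k * (C ((2:ℝ)^(M-k)) * X^(M-k))) =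
      C ((2:ℝ)^(M-k)) * ((1 - X^2)^k * X^(M-k)) from by ring,
    Polynomial.coeff_C_mul, Polynomial.coeff_mul_X_pow']
  by_cases h1 : k = M
  · subst h1
    simp only [Nat.sub_self, pow_zero, if_pos (by omega : (0:ℕ) ≤ 2), Nat.sub_zero,
      coeff_one_sub_sq]
    rw [if_pos ⟨by norm_num, by omega⟩, if_neg (by omega : ¬ k = k - 2)]
    norm_num [Nat.choose_self, Nat.choose_one_right]
    ring
  · by_cases h2' : k = M - 1
    · have he : M - k = 1 := by omega
      rw [he, if_pos (by omega : (1:ℕ) ≤ 2), coeff_one_sub_sq]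
      rw [if_neg (by omega), if_neg (by omega), if_neg (by omega)]
      ring
    · by_cases h3 : k = M - 2
      · have he : M - k = 2 := by omega
        rw [he, if_pos (le_refl 2), Nat.sub_self, coeff_one_sub_sq]
        rw [if_pos ⟨by norm_num, by omega⟩, if_neg h1, if_pos h3]
        have hcs : M.choose k = M.choose 2 := by
          rw [show k = M - 2 from h3, Nat.choose_symm (by omega)]
        have hc2 : (M.choose 2) * 2 = M * (M-1) := by
          rw [Nat.choose_two_right]
          rw [Nat.div_mul_cancel]
          rcases Nat.even_or_odd M with h | h
          · exact Dvd.dvd.mul_right h.two_dvd _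
          · exact Dvd.dvd.mul_left (Nat.Odd.sub_odd h odd_one).two_dvd _
        have hval : ((M.choose 2 : ℕ) : ℝ) * 2 = (M:ℝ) * ((M:ℝ) - 1) := by
          have hcast := congrArg (Nat.cast : ℕ → ℝ) hc2
          push_cast [Nat.cast_sub (by omega : 1 ≤ M)] at hcast
          linarith
        subst h3
        rw [hcs, pow_zero, Nat.choose_zero_right]
        push_cast
        linear_combination (2:ℝ) * Mk (M-2) * hval
      · have he : 3 ≤ M - k := by omega
        rw [if_neg (by omega), if_neg h1, if_neg h3]
        ring

/-- Core algebraic lemma: from the rotation-invariance identity on the circle one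
obtains the moment recursion. -/
theorem key_alg (M : ℕ) (hM : 2 ≤ M) (Mk : ℕ → ℝ)
    (hcirc : ∀ c s : ℝ, c^2 + s^2 = 1 → ∑ k ∈ Finset.range (M+1),
        (M.choose k : ℝ) * Mk k * c^k * s^(M-k) = Mk M) :
    ((M:ℝ) - 1) * Mk (M-2) = Mk M := by
  have hMk : ∀ t : ℝ, ∑ k ∈ Finset.range (M+1),
      (M.choose k : ℝ) * Mk k * (1-t^2)^k * (2*t)^(M-k) = Mk M * (1+t^2)^M := by
    intro t
    have hu : (1+t^2) ≠ 0 := by positivity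
    set c : ℝ := (1-t^2)/(1+t^2) with hc
    set s : ℝ := (2*t)/(1+t^2) with hs
    have hcs : c^2 + s^2 = 1 := by
      rw [hc, hs]; field_simp; ring
    have hcu : c * (1+t^2) = 1 - t^2 := by rw [hc]; field_simp
    have hsu : s * (1+t^2) = 2*t := by rw [hs]; field_simp
    calc ∑ k ∈ Finset.range (M+1), (M.choose k : ℝ) * Mk k * (1-t^2)^k * (2*t)^(M-k)
        = (∑ k ∈ Finset.range (M+1), (M.choose k : ℝ) * Mk k * c^k * s^(M-k)) * (1+t^2)^M := by
          rw [Finset.sum_mul]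
          apply Finset.sum_congr rfl
          intro k hk
          have hkM : k ≤ M := by have := Finset.mem_range.mp hk; omega
          rw [← hcu, ← hsu, mul_pow, mul_pow,
            show (1+t^2)^M = (1+t^2)^k * (1+t^2)^(M-k) from by
              rw [← pow_add, Nat.add_sub_cancel' hkM]]
          ring
      _ = Mk M * (1+t^2)^M := by rw [hcirc c s hcs]
  have hPQ : (∑ k ∈ Finset.range (M+1),
      C ((M.choose k : ℝ) * Mk k) * ((1 - X^2)^k * (C 2 * X)^(M-k)))
      = C (Mk M) * (1 + X^2)^M := by
    apply Polynomial.funext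
    intro t
    simp only [eval_finset_sum, eval_mul, eval_pow, eval_add, eval_sub, eval_one, eval_C, eval_X]
    calc _ = ∑ k ∈ Finset.range (M+1), (M.choose k : ℝ) * Mk k * (1-t^2)^k * (2*t)^(M-k) := by
            apply Finset.sum_congr rfl; intro k _; ring
      _ = Mk M * (1+t^2)^M := hMk t
  have h2 := congrArg (fun p => p.coeff 2) hPQ
  simp only [Polynomial.finset_sum_coeff, Polynomial.coeff_C_mul,
    coeff_two_one_add_sq M (by omega)] at h2
  rw [Finset.sum_congr rfl (fun k hk =>
      term_coeff M k hM (by have := Finset.mem_range.mp hk; omega) Mk)] at h2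
  rw [Finset.sum_add_distrib, Finset.sum_ite_eq' _ M, Finset.sum_ite_eq' _ (M-2),
    if_pos (Finset.mem_range.mpr (by omega)), if_pos (Finset.mem_range.mpr (by omega))] at h2
  have key : (2*(M:ℝ)) * (((M:ℝ)-1) * Mk (M-2)) = (2*(M:ℝ)) * Mk M := by linear_combination h2
  exact mul_left_cancel₀ (by positivity) key


/-! ### Isometries of Euclidean space -/

variable {d : ℕ}

def rotFun (i0 i1 : Fin d) (c s : ℝ) (x : EuclideanSpace ℝ (Fin d)) : EuclideanSpace ℝ (Fin d) :=
  WithLp.toLp 2 (fun i => if i = i0 then c * x i0 - s * x i1 else if i = i1 then s * x i0 + c * x i1 else x i)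

theorem rotFun_inner (i0 i1 : Fin d) (hne : i0 ≠ i1) (c s : ℝ) (h : c^2 + s^2 = 1)
    (x y : EuclideanSpace ℝ (Fin d)) :
    (inner ℝ (rotFun i0 i1 c s x) (rotFun i0 i1 c s y) : ℝ) = inner ℝ x y := by
  simp only [PiLp.inner_apply, RCLike.inner_apply, conj_trivial]
  have key : ∀ z w : EuclideanSpace ℝ (Fin d),
      ∑ i ∈ ({i0, i1} : Finset (Fin d)), z i * w i
      = ∑ i ∈ ({i0, i1} : Finset (Fin d)), rotFun i0 i1 c s z i * rotFun i0 i1 c s w i := by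
    intro z w
    rw [Finset.sum_pair hne, Finset.sum_pair hne]
    simp only [rotFun, PiLp.toLp_apply, if_pos rfl, if_neg hne, if_neg (Ne.symm hne), if_true]
    linear_combination -(z i0 * w i0 + z i1 * w i1) * h
  have hsplit : ∀ z w : EuclideanSpace ℝ (Fin d),
      (∑ i, z i * w i)
      = ∑ i ∈ ({i0, i1} : Finset (Fin d)), z i * w i
        + ∑ i ∈ ({i0, i1} : Finset (Fin d))ᶜ, z i * w i := by
    intro z w; rw [Finset.sum_add_sum_compl]
  rw [hsplit, hsplit, ← key]
  congr 1
  apply Finset.sum_congr rfl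
  intro i hi
  simp only [Finset.mem_compl, Finset.mem_insert, Finset.mem_singleton, not_or] at hi
  simp [rotFun, hi.1, hi.2]

theorem rotFun_linear (i0 i1 : Fin d) (c s : ℝ) :
    IsLinearMap ℝ (rotFun i0 i1 c s) := by
  constructor
  · intro x y
    ext i
    simp only [rotFun, PiLp.add_apply, PiLp.toLp_apply]
    split_ifs <;> ring
  · intro a x
    ext i
    simp only [rotFun, PiLp.smul_apply, smul_eq_mul, PiLp.toLp_apply]
    split_ifs <;> ring

theorem rotFun_invol (i0 i1 : Fin d) (hne : i0 ≠ i1) (c s : ℝ) (h : c^2 + s^2 = 1) (x : EuclideanSpace ℝ (Fin d)) :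
    rotFun i0 i1 c (-s) (rotFun i0 i1 c s x) = x := by
  ext i
  by_cases h0 : i = i0
  · subst h0
    simp only [rotFun, PiLp.toLp_apply, if_pos rfl, if_neg hne, if_neg (Ne.symm hne), if_true]
    linear_combination (x i) * h
  · by_cases h1 : i = i1
    · subst h1
      simp only [rotFun, PiLp.toLp_apply, if_pos rfl, if_neg hne, if_neg (Ne.symm hne), if_neg h0, if_true]
      linear_combination (x i) * h
    · simp only [rotFun, PiLp.toLp_apply, if_neg h0, if_neg h1]

/-- Rotation in the `(i0, i1)` coordinate plane as a linear isometry equivalence. -/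
noncomputable def rotIso (i0 i1 : Fin d) (hne : i0 ≠ i1) (c s : ℝ) (h : c^2 + s^2 = 1) :
    EuclideanSpace ℝ (Fin d) ≃ₗᵢ[ℝ] EuclideanSpace ℝ (Fin d) :=
  LinearEquiv.isometryOfInner
    { toFun := rotFun i0 i1 c s
      invFun := rotFun i0 i1 c (-s)
      map_add' := (rotFun_linear i0 i1 c s).map_add
      map_smul' := (rotFun_linear i0 i1 c s).map_smul
      left_inv := rotFun_invol i0 i1 hne c s h
      right_inv := fun x => by
        have := rotFun_invol i0 i1 hne c (-s) (by linarith [h, neg_sq s] : c^2 + (-s)^2 = 1) x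
        rwa [neg_neg] at this }
    (fun x y => rotFun_inner i0 i1 hne c s h x y)

theorem rotIso_apply (i0 i1 : Fin d) (hne : i0 ≠ i1) (c s : ℝ) (h : c^2 + s^2 = 1)
    (x : EuclideanSpace ℝ (Fin d)) :
    rotIso i0 i1 hne c s h x = rotFun i0 i1 c s x := rfl

/-- Coordinate permutation as a linear isometry equivalence. -/
noncomputable def permIso (e : Equiv.Perm (Fin d)) :
    EuclideanSpace ℝ (Fin d) ≃ₗᵢ[ℝ] EuclideanSpace ℝ (Fin d) :=
  LinearIsometryEquiv.piLpCongrLeft 2 ℝ ℝ e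

theorem permIso_apply (e : Equiv.Perm (Fin d)) (x : EuclideanSpace ℝ (Fin d)) (i : Fin d) :
    permIso e x i = x (e.symm i) := rfl

/-! ### Integral invariance and integrability -/

variable {σ : Measure (EuclideanSpace ℝ (Fin d))}

theorem integral_comp_iso
    (hinv : ∀ O : (EuclideanSpace ℝ (Fin d)) ≃ₗᵢ[ℝ] (EuclideanSpace ℝ (Fin d)),
      Measure.map (⇑O) σ = σ)
    (O : EuclideanSpace ℝ (Fin d) ≃ₗᵢ[ℝ] EuclideanSpace ℝ (Fin d))
    (g : EuclideanSpace ℝ (Fin d) → ℝ) (hg : Continuous g) :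
    ∫ x, g (O x) ∂σ = ∫ x, g x ∂σ := by
  conv_rhs => rw [← hinv O]
  rw [integral_map O.continuous.aemeasurable hg.aestronglyMeasurable]

theorem integrable_of_unit_bound [IsProbabilityMeasure σ] (hsupp : ∀ᵐ x ∂σ, ‖x‖ = 1)
    (g : EuclideanSpace ℝ (Fin d) → ℝ) (hg : Continuous g)
    (hb : ∀ x : EuclideanSpace ℝ (Fin d), ‖x‖ = 1 → |g x| ≤ 1) : Integrable g σ :=
  (integrable_const (1:ℝ)).mono' hg.aestronglyMeasurable
    (hsupp.mono fun x hx => by simpa [Real.norm_eq_abs] using hb x hx)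

theorem abs_coord_le_norm (x : EuclideanSpace ℝ (Fin d)) (i : Fin d) : |x i| ≤ ‖x‖ := by
  rw [EuclideanSpace.norm_eq, ← Real.sqrt_sq_eq_abs]
  apply Real.sqrt_le_sqrt
  refine Finset.single_le_sum (f := fun k => ‖x k‖^2) (fun k _ => sq_nonneg _)
    (Finset.mem_univ i) |>.trans_eq' ?_
  rw [Real.norm_eq_abs, sq_abs]

theorem continuous_coord (i : Fin d) : Continuous (fun x : EuclideanSpace ℝ (Fin d) => x i) :=
  (continuous_apply i).comp (PiLp.continuous_ofLp 2 _)

theorem integrable_pair [IsProbabilityMeasure σ] (hsupp : ∀ᵐ x ∂σ, ‖x‖ = 1)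
    (i0 i1 : Fin d) (a b : ℕ) :
    Integrable (fun x : EuclideanSpace ℝ (Fin d) => (x i0)^a * (x i1)^b) σ := by
  apply integrable_of_unit_bound hsupp
  · exact ((continuous_coord i0).pow a).mul ((continuous_coord i1).pow b)
  · intro x hx
    rw [abs_mul, abs_pow, abs_pow]
    have h0 : |x i0| ≤ 1 := hx ▸ abs_coord_le_norm x i0
    have h1 : |x i1| ≤ 1 := hx ▸ abs_coord_le_norm x i1
    exact mul_le_one₀ (pow_le_one₀ (abs_nonneg _) h0) (by positivity)
      (pow_le_one₀ (abs_nonneg _) h1)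

theorem integrable_prod_fun [IsProbabilityMeasure σ] (hsupp : ∀ᵐ x ∂σ, ‖x‖ = 1)
    {m : ℕ} (f : Fin m → Fin d) :
    Integrable (fun x : EuclideanSpace ℝ (Fin d) => ∏ i, x (f i)) σ := by
  apply integrable_of_unit_bound hsupp
  · exact continuous_finset_prod _ fun i _ => continuous_coord (f i)
  · intro x hx
    rw [Finset.abs_prod]
    exact Finset.prod_le_one (fun i _ => abs_nonneg _)
      (fun i _ => hx ▸ abs_coord_le_norm x (f i))

theorem integrable_mon [IsProbabilityMeasure σ] (hsupp : ∀ᵐ x ∂σ, ‖x‖ = 1)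
    (e : Fin d → ℕ) :
    Integrable (fun x : EuclideanSpace ℝ (Fin d) => ∏ i, (x i)^(e i)) σ := by
  apply integrable_of_unit_bound hsupp
  · exact continuous_finset_prod _ fun i _ => (continuous_coord i).pow (e i)
  · intro x hx
    rw [Finset.abs_prod]
    apply Finset.prod_le_one (fun i _ => abs_nonneg _)
    intro i _
    rw [abs_pow]
    exact pow_le_one₀ (abs_nonneg _) (hx ▸ abs_coord_le_norm x i)


/-! ### sphericalMoment basic lemmas -/

theorem sphericalMoment_zero (d : ℕ) : sphericalMoment d 0 = 1 := by
  simp [sphericalMoment]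

theorem sphericalMoment_one (d : ℕ) : sphericalMoment d 1 = 0 := by
  simp [sphericalMoment]

theorem sphericalMoment_rec (d : ℕ) (hd : 1 ≤ d) (j : ℕ) :
    sphericalMoment d (j+2) = sphericalMoment d j * (((j:ℝ)+1)/((d:ℝ)+j)) := by
  have hd1 : (1:ℝ) ≤ (d:ℝ) := by exact_mod_cast hd
  by_cases hodd : Odd j
  · rw [sphericalMoment, sphericalMoment, if_pos hodd,
      if_pos (by obtain ⟨w,hw⟩ := hodd; exact ⟨w+1, by omega⟩ : Odd (j+2))]
    ring
  · rw [sphericalMoment, sphericalMoment, if_neg hodd, if_neg (fun hcon => hodd (by obtain ⟨w,hw⟩ := hcon; exact ⟨w-1, by omega⟩))]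
    have hje : 2 * (j/2) = j := by
      have := Nat.even_iff.mp (Nat.not_odd_iff_even.mp hodd)
      omega
    have hj2 : (j+2)/2 = j/2 + 1 := by omega
    rw [hj2, Finset.prod_range_succ, Finset.prod_range_succ]
    have hcast : ((j/2 : ℕ):ℝ) * 2 = (j:ℝ) := by
      exact_mod_cast congrArg (Nat.cast : ℕ → ℝ) (by omega : (j/2) * 2 = j)
    have hnum : (2 * ((j/2 : ℕ):ℝ) + 1) = (j:ℝ)+1 := by linarith
    have hden : ((d:ℝ) + 2*((j/2:ℕ):ℝ)) = (d:ℝ)+(j:ℝ) := by linarith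
    rw [hnum, hden]
    have hD : (∏ i ∈ Finset.range (j/2), ((d:ℝ) + 2*(i:ℝ))) ≠ 0 := by
      apply ne_of_gt
      apply Finset.prod_pos
      intro i _
      have : (0:ℝ) ≤ 2*(i:ℝ) := by positivity
      linarith
    have hdj : ((d:ℝ) + (j:ℝ)) ≠ 0 := by
      have : (0:ℝ) ≤ (j:ℝ) := by positivity
      intro hcon; linarith
    field_simp
    try ring

/-! ### The coordinate moment computation -/

theorem moment_coord (hd : 2 ≤ d)
    [IsProbabilityMeasure σ] (hsupp : ∀ᵐ x ∂σ, ‖x‖ = 1)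
    (hinv : ∀ O : (EuclideanSpace ℝ (Fin d)) ≃ₗᵢ[ℝ] (EuclideanSpace ℝ (Fin d)),
      Measure.map (⇑O) σ = σ)
    (k : ℕ) : ∫ x, (x (⟨0, by omega⟩ : Fin d))^k ∂σ = sphericalMoment d k := by
  set i0 : Fin d := ⟨0, by omega⟩ with hi0
  set i1 : Fin d := ⟨1, by omega⟩ with hi1
  have hne : i0 ≠ i1 := by simp [hi0, hi1, Fin.ext_iff]
  -- base case k = 1 : odd symmetry
  have hbase1 : ∫ x, (x i0 : ℝ)^1 ∂σ = 0 := by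
    have hneg := integral_comp_iso hinv (LinearIsometryEquiv.neg ℝ)
      (fun x => (x i0)^1) ((continuous_coord i0).pow 1)
    simp only [pow_one] at hneg ⊢
    have : ∀ x : EuclideanSpace ℝ (Fin d), ((LinearIsometryEquiv.neg ℝ) x) i0 = -(x i0) := by
      intro x; rfl
    rw [show (fun x : EuclideanSpace ℝ (Fin d) => ((LinearIsometryEquiv.neg ℝ) x) i0)
        = (fun x : EuclideanSpace ℝ (Fin d) => -(x i0)) from funext this] at hneg
    rw [integral_neg] at hneg
    linarith
  -- the two-step recursion
  have key_step : ∀ j : ℕ, ∫ x, (x i0)^(j+2) ∂σ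
      = (∫ x, (x i0)^j ∂σ) * (((j:ℝ)+1)/((d:ℝ)+(j:ℝ))) := by
    intro j
    set M := j + 2 with hMdef
    set Mk : ℕ → ℝ := fun k => ∫ x, (x i0)^k * (x i1)^(M-k) ∂σ with hMkdef
    have hMkM : Mk M = ∫ x, (x i0)^M ∂σ := by
      simp [hMkdef]
    have hMkj : Mk j = ∫ x, (x i0)^j * (x i1)^2 ∂σ := by
      have : M - j = 2 := by omega
      simp [hMkdef, this]
    -- circle identity via rotations
    have hcirc : ∀ c s : ℝ, c^2 + s^2 = 1 → ∑ k ∈ Finset.range (M+1),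
        (M.choose k : ℝ) * Mk k * c^k * s^(M-k) = Mk M := by
      intro c s hcs
      have hcs' : c^2 + (-s)^2 = 1 := by rw [neg_sq]; exact hcs
      have hrot := integral_comp_iso hinv (rotIso i0 i1 hne c (-s) hcs')
        (fun y => (y i0)^M) ((continuous_coord i0).pow M)
      have hpt : (fun x : EuclideanSpace ℝ (Fin d) =>
          ((rotIso i0 i1 hne c (-s) hcs' x) i0)^M)
          = (fun x : EuclideanSpace ℝ (Fin d) => (c * x i0 + s * x i1)^M) := by
        funext x
        have hco : (rotIso i0 i1 hne c (-s) hcs' x) i0 = c * x i0 + s * x i1 := by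
          rw [rotIso_apply]
          show (if i0 = i0 then c * x i0 - (-s) * x i1
            else if i0 = i1 then (-s) * x i0 + c * x i1 else x i0) = _
          rw [if_pos rfl]; ring
        rw [hco]
      rw [hpt] at hrot
      have hexp : ∀ x : EuclideanSpace ℝ (Fin d), (c * x i0 + s * x i1)^M
          = ∑ k ∈ Finset.range (M+1),
            ((M.choose k : ℝ) * c^k * s^(M-k)) * ((x i0)^k * (x i1)^(M-k)) := by
        intro x
        rw [add_pow]
        apply Finset.sum_congr rfl
        intro k _
        rw [mul_pow, mul_pow]
        ring
      calc ∑ k ∈ Finset.range (M+1), (M.choose k : ℝ) * Mk k * c^k * s^(M-k)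
          = ∑ k ∈ Finset.range (M+1),
            ∫ x, ((M.choose k : ℝ) * c^k * s^(M-k)) * ((x i0)^k * (x i1)^(M-k)) ∂σ := by
            apply Finset.sum_congr rfl
            intro k _
            rw [MeasureTheory.integral_const_mul]
            simp only [hMkdef]
            ring
        _ = ∫ x, ∑ k ∈ Finset.range (M+1),
              ((M.choose k : ℝ) * c^k * s^(M-k)) * ((x i0)^k * (x i1)^(M-k)) ∂σ :=
            (integral_finset_sum _ (fun k _ =>
              (integrable_pair hsupp i0 i1 k (M-k)).const_mul _)).symm
        _ = ∫ x, (c * x i0 + s * x i1)^M ∂σ :=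
            integral_congr_ae (Filter.Eventually.of_forall fun x => (hexp x).symm)
        _ = ∫ x, (x i0)^M ∂σ := hrot
        _ = Mk M := hMkM.symm
    have hrec := key_alg M (by omega) Mk hcirc
    -- R1 : splitting 1 = ∑ (x i)^2
    have hR1 : ∫ x, (x i0)^j ∂σ = ∑ i : Fin d, ∫ x, (x i0)^j * (x i)^2 ∂σ := by
      rw [← integral_finset_sum _ (fun i _ => integrable_pair hsupp i0 i j 2)]
      apply integral_congr_ae
      filter_upwards [hsupp] with x hx
      have hsum : ∑ i : Fin d, (x i)^2 = 1 := by
        have h1 : (inner ℝ x x : ℝ) = ∑ i, x i * x i := by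
          simp only [PiLp.inner_apply, RCLike.inner_apply, conj_trivial]
        have h2 : (inner ℝ x x : ℝ) = 1 := by
          rw [real_inner_self_eq_norm_sq, hx]; norm_num
        calc ∑ i : Fin d, (x i)^2 = ∑ i, x i * x i := by
              apply Finset.sum_congr rfl; intro i _; ring
          _ = 1 := by rw [← h1, h2]
      calc (x i0)^j = (x i0)^j * ∑ i : Fin d, (x i)^2 := by rw [hsum, mul_one]
        _ = ∑ i : Fin d, (x i0)^j * (x i)^2 := by rw [Finset.mul_sum]
    -- R2 : all off-axis second moments agree
    have hR2 : ∀ i : Fin d, i ≠ i0 → ∫ x, (x i0)^j * (x i)^2 ∂σ = Mk j := by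
      intro i hi
      rw [hMkj]
      by_cases hii : i = i1
      · rw [hii]
      · have hswap := integral_comp_iso hinv (permIso (Equiv.swap i i1))
          (fun x => (x i0)^j * (x i1)^2)
          (((continuous_coord i0).pow j).mul ((continuous_coord i1).pow 2))
        have hpt : (fun x : EuclideanSpace ℝ (Fin d) =>
            ((permIso (Equiv.swap i i1) x) i0)^j * ((permIso (Equiv.swap i i1) x) i1)^2)
            = (fun x : EuclideanSpace ℝ (Fin d) => (x i0)^j * (x i)^2) := by
          funext x
          rw [permIso_apply, permIso_apply, Equiv.symm_swap,
            Equiv.swap_apply_of_ne_of_ne (Ne.symm hi) (Ne.symm (by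
              intro hcon; exact hne (hcon ▸ rfl))), Equiv.swap_apply_right]
        rw [hpt] at hswap
        exact hswap
    -- assemble
    have hsplit : ∫ x, (x i0)^j ∂σ
        = (∫ x, (x i0)^(j+2) ∂σ) + ((d:ℝ) - 1) * Mk j := by
      rw [hR1, ← Finset.add_sum_erase _ _ (Finset.mem_univ i0)]
      congr 1
      · apply integral_congr_ae
        apply Filter.Eventually.of_forall
        intro x
        show x i0 ^ j * x i0 ^ 2 = x i0 ^ (j+2)
        rw [← pow_add]
      · rw [Finset.sum_congr rfl (fun i hi => hR2 i (Finset.ne_of_mem_erase hi))]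
        rw [Finset.sum_const, Finset.card_erase_of_mem (Finset.mem_univ i0),
          Finset.card_univ, Fintype.card_fin, nsmul_eq_mul]
        congr 1
        have : ((d - 1 : ℕ) : ℝ) = (d:ℝ) - 1 := by
          push_cast [Nat.cast_sub (by omega : 1 ≤ d)]
          ring
        exact this
    -- hrec : ((M:ℝ) - 1) * Mk (M-2) = Mk M
    have hMj : M - 2 = j := by omega
    rw [hMj, hMkM] at hrec
    have hMcast : ((M:ℕ):ℝ) = (j:ℝ) + 2 := by
      rw [hMdef]; push_cast; ring
    rw [hMcast] at hrec
    -- hrec : ((j:ℝ)+2-1) * Mk j = ∫ x0^M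
    have hdj : (0:ℝ) < (d:ℝ) + (j:ℝ) := by
      have h2 : (2:ℝ) ≤ (d:ℝ) := by exact_mod_cast hd
      have : (0:ℝ) ≤ (j:ℝ) := by positivity
      linarith
    have hj1 : (0:ℝ) < (j:ℝ) + 1 := by positivity
    rw [← mul_div_assoc, eq_div_iff (ne_of_gt hdj)]
    linear_combination (-(j:ℝ)-1) * hsplit + (-(d:ℝ)+1) * hrec
  -- two-step induction
  induction k using Nat.twoStepInduction with
  | zero => simp [sphericalMoment_zero]
  | one => rw [sphericalMoment_one]; exact hbase1
  | more n ih1 ih2 =>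
    rw [key_step n, ih1, sphericalMoment_rec d (by omega) n]


theorem moment_vec (hd : 2 ≤ d)
    [IsProbabilityMeasure σ] (hsupp : ∀ᵐ x ∂σ, ‖x‖ = 1)
    (hinv : ∀ O : (EuclideanSpace ℝ (Fin d)) ≃ₗᵢ[ℝ] (EuclideanSpace ℝ (Fin d)),
      Measure.map (⇑O) σ = σ)
    (k : ℕ) (v : EuclideanSpace ℝ (Fin d)) (hv : ‖v‖ = 1) :
    ∫ x, (inner ℝ v x : ℝ)^k ∂σ = sphericalMoment d k := by
  set i0 : Fin d := ⟨0, by omega⟩ with hi0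
  set e0 : EuclideanSpace ℝ (Fin d) := EuclideanSpace.single i0 1 with he0def
  have he0 : ‖e0‖ = 1 := by rw [he0def, EuclideanSpace.norm_single]; norm_num
  set K := (ℝ ∙ (v - e0))ᗮ with hK
  have hOv : K.reflection v = e0 := Submodule.reflection_sub (by rw [hv, he0])
  have hpt : ∀ x : EuclideanSpace ℝ (Fin d), (inner ℝ v (K.reflection x) : ℝ) = x i0 := by
    intro x
    calc (inner ℝ v (K.reflection x) : ℝ)
        = inner ℝ (K.reflection v) (K.reflection (K.reflection x)) :=
          (K.reflection.inner_map_map v (K.reflection x)).symm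
      _ = inner ℝ e0 x := by rw [hOv, Submodule.reflection_reflection]
      _ = x i0 := by rw [he0def, EuclideanSpace.inner_single_left]; simp
  have hcomp := integral_comp_iso hinv K.reflection (fun y => (inner ℝ v y : ℝ)^k)
    ((continuous_const.inner continuous_id).pow k)
  rw [show (fun x : EuclideanSpace ℝ (Fin d) => ((inner ℝ v (K.reflection x) : ℝ))^k)
      = fun x : EuclideanSpace ℝ (Fin d) => (x i0)^k from funext (fun x => by rw [hpt x])] at hcomp
  rw [← hcomp]
  exact moment_coord hd hsupp hinv k

theorem inner_pow_expand (m : ℕ) (a b : EuclideanSpace ℝ (Fin d)) :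
    (inner ℝ a b : ℝ)^m = ∑ f : Fin m → Fin d, (∏ i, a (f i)) * (∏ i, b (f i)) := by
  rw [show (inner ℝ a b : ℝ) = ∑ i, a i * b i from by simp [PiLp.inner_apply, RCLike.inner_apply, mul_comm]]
  rw [Fintype.sum_pow]
  apply Finset.sum_congr rfl
  intro f _
  rw [← Finset.prod_mul_distrib]

end WHDaux

set_option maxHeartbeats 1000000 in
open WHDaux in
/-- For unit vectors `v_j` in `ℝ^d` and real weights summing to 1,
`Σ_j Σ_k w_j w_k ⟨v_j,v_k⟩^m ≥ b_m(ℝ^d)`, with equality iff the weighted point set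
integrates every homogeneous polynomial of degree `m` exactly against the
rotation-invariant probability measure `σ` on the sphere. -/
theorem weighted_half_design_characterisation (d : ℕ) (hd : 2 ≤ d)
    (σ : Measure (EuclideanSpace ℝ (Fin d))) [IsProbabilityMeasure σ]
    (hsupp : ∀ᵐ x ∂σ, ‖x‖ = 1)
    (hinv : ∀ O : (EuclideanSpace ℝ (Fin d)) ≃ₗᵢ[ℝ] (EuclideanSpace ℝ (Fin d)),
      Measure.map (⇑O) σ = σ)
    (m : ℕ) (hm : 1 ≤ m)
    (n : ℕ) (v : Fin n → EuclideanSpace ℝ (Fin d)) (hv : ∀ j, ‖v j‖ = 1)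
    (w : Fin n → ℝ) (hw : ∑ j, w j = 1) :
    sphericalMoment d m ≤ ∑ j, ∑ k, w j * w k * (inner ℝ (v j) (v k) : ℝ) ^ m ∧
    ((∑ j, ∑ k, w j * w k * (inner ℝ (v j) (v k) : ℝ) ^ m = sphericalMoment d m) ↔
      ∀ p : MvPolynomial (Fin d) ℝ, p.IsHomogeneous m →
        ∑ j, w j * MvPolynomial.eval (fun i => v j i) p =
          ∫ x, MvPolynomial.eval (fun i => x i) p ∂σ) := by
  classical
  set A : (Fin m → Fin d) → ℝ := fun f => ∑ j, w j * ∏ i, (v j) (f i) with hA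
  set B : (Fin m → Fin d) → ℝ := fun f => ∫ x, ∏ i, x (f i) ∂σ with hB
  have hmom : ∀ y : EuclideanSpace ℝ (Fin d), ‖y‖ = 1 →
      (∑ f : Fin m → Fin d, (∏ i, y (f i)) * B f) = sphericalMoment d m := by
    intro y hy
    calc ∑ f : Fin m → Fin d, (∏ i, y (f i)) * B f
        = ∑ f : Fin m → Fin d, ∫ x, (∏ i, y (f i)) * (∏ i, x (f i)) ∂σ := by
          apply Finset.sum_congr rfl
          intro f _
          rw [hB, MeasureTheory.integral_const_mul]
      _ = ∫ x, ∑ f : Fin m → Fin d, (∏ i, y (f i)) * (∏ i, x (f i)) ∂σ :=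
          (integral_finset_sum _ fun f _ => (integrable_prod_fun hsupp f).const_mul _).symm
      _ = ∫ x, (inner ℝ y x : ℝ)^m ∂σ :=
          integral_congr_ae (Filter.Eventually.of_forall fun x => (inner_pow_expand m y x).symm)
      _ = sphericalMoment d m := moment_vec hd hsupp hinv m y hy
  have hAB : ∑ f : Fin m → Fin d, A f * B f = sphericalMoment d m := by
    calc ∑ f : Fin m → Fin d, A f * B f
        = ∑ f : Fin m → Fin d, ∑ j, w j * ((∏ i, (v j) (f i)) * B f) := by
          apply Finset.sum_congr rfl
          intro f _
          rw [hA, Finset.sum_mul]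
          apply Finset.sum_congr rfl
          intro j _
          ring
      _ = ∑ j, ∑ f : Fin m → Fin d, w j * ((∏ i, (v j) (f i)) * B f) := Finset.sum_comm
      _ = ∑ j, w j * sphericalMoment d m := by
          apply Finset.sum_congr rfl
          intro j _
          rw [← Finset.mul_sum, hmom (v j) (hv j)]
      _ = sphericalMoment d m := by rw [← Finset.sum_mul, hw, one_mul]
  have hBB : ∑ f : Fin m → Fin d, B f * B f = sphericalMoment d m := by
    calc ∑ f : Fin m → Fin d, B f * B f
        = ∑ f : Fin m → Fin d, ∫ x, B f * ∏ i, x (f i) ∂σ := by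
          apply Finset.sum_congr rfl
          intro f _
          rw [MeasureTheory.integral_const_mul]
      _ = ∫ x, ∑ f : Fin m → Fin d, B f * ∏ i, x (f i) ∂σ :=
          (integral_finset_sum _ fun f _ => (integrable_prod_fun hsupp f).const_mul _).symm
      _ = ∫ _x, sphericalMoment d m ∂σ := by
          apply integral_congr_ae
          filter_upwards [hsupp] with x hx
          calc ∑ f : Fin m → Fin d, B f * ∏ i, x (f i)
              = ∑ f : Fin m → Fin d, (∏ i, x (f i)) * B f := by
                apply Finset.sum_congr rfl; intro f _; ring
            _ = sphericalMoment d m := hmom x hx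
      _ = sphericalMoment d m := by simp
  have hAA : (∑ j, ∑ k, w j * w k * (inner ℝ (v j) (v k) : ℝ) ^ m)
      = ∑ f : Fin m → Fin d, A f * A f := by
    calc ∑ j, ∑ k, w j * w k * (inner ℝ (v j) (v k) : ℝ) ^ m
        = ∑ j, ∑ k, ∑ f : Fin m → Fin d,
            (w j * ∏ i, (v j) (f i)) * (w k * ∏ i, (v k) (f i)) := by
          apply Finset.sum_congr rfl; intro j _
          apply Finset.sum_congr rfl; intro k _
          rw [inner_pow_expand m (v j) (v k), Finset.mul_sum]
          apply Finset.sum_congr rfl; intro f _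
          ring
      _ = ∑ j, ∑ f : Fin m → Fin d, ∑ k,
            (w j * ∏ i, (v j) (f i)) * (w k * ∏ i, (v k) (f i)) := by
          apply Finset.sum_congr rfl; intro j _
          exact Finset.sum_comm
      _ = ∑ f : Fin m → Fin d, ∑ j, ∑ k,
            (w j * ∏ i, (v j) (f i)) * (w k * ∏ i, (v k) (f i)) := Finset.sum_comm
      _ = ∑ f : Fin m → Fin d, A f * A f := by
          apply Finset.sum_congr rfl
          intro f _
          rw [hA, Finset.sum_mul_sum]
  have hkey : (∑ j, ∑ k, w j * w k * (inner ℝ (v j) (v k) : ℝ) ^ m) - sphericalMoment d m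
      = ∑ f : Fin m → Fin d, (A f - B f)^2 := by
    have hexp : ∑ f : Fin m → Fin d, (A f - B f)^2
        = ∑ f : Fin m → Fin d, (A f * A f - 2 * (A f * B f) + B f * B f) := by
      apply Finset.sum_congr rfl; intro f _; ring
    rw [hexp, Finset.sum_add_distrib, Finset.sum_sub_distrib, ← Finset.mul_sum,
      hAB, hBB, ← hAA]
    ring
  have hnn : 0 ≤ ∑ f : Fin m → Fin d, (A f - B f)^2 :=
    Finset.sum_nonneg fun f _ => sq_nonneg _
  constructor
  · linarith [hkey]
  constructor
  · -- equality → design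
    intro heq p hp
    have hz : ∑ f : Fin m → Fin d, (A f - B f)^2 = 0 := by
      rw [← hkey, heq, sub_self]
    have hfe : ∀ f : Fin m → Fin d, A f = B f := by
      intro f
      have h0 := (Finset.sum_eq_zero_iff_of_nonneg (fun f _ => sq_nonneg (A f - B f))).mp
        hz f (Finset.mem_univ f)
      have := pow_eq_zero_iff (two_ne_zero) |>.mp h0
      linarith
    -- reduce to monomials
    have hmono : ∀ α : Fin d →₀ ℕ, α ∈ p.support →
        (∑ j, w j * ∏ i, (v j) i ^ α i) = ∫ x, ∏ i, (x i : ℝ) ^ α i ∂σ := by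
      intro α hα
      have hdeg : ∑ i, α i = m := by
        have h1 := hp (MvPolynomial.mem_support_iff.mp hα)
        rw [Pi.one_def, ← Finsupp.degree_eq_weight_one] at h1
        rw [← h1, Finsupp.degree]
        exact (Finset.sum_subset (Finset.subset_univ _)
          (fun i _ hi => Finsupp.notMem_support_iff.mp hi)).symm
      have e : Fin m ≃ Σ i : Fin d, Fin (α i) :=
        Fintype.equivOfCardEq (by simp [Fintype.card_sigma, hdeg])
      set f : Fin m → Fin d := fun k => (e k).1 with hf
      have hmon : ∀ y : EuclideanSpace ℝ (Fin d), (∏ i, (y i : ℝ) ^ α i) = ∏ i, y (f i) := by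
        intro y
        calc ∏ i : Fin d, (y i : ℝ) ^ α i
            = ∏ i : Fin d, ∏ _j : Fin (α i), y i := by
              apply Finset.prod_congr rfl
              intro i _
              rw [Finset.prod_const, Finset.card_univ, Fintype.card_fin]
          _ = ∏ q : Σ i : Fin d, Fin (α i), y q.1 := by
              rw [← Finset.univ_sigma_univ, Finset.prod_sigma]
          _ = ∏ k : Fin m, y (f k) := (Equiv.prod_comp e (fun q => y q.1)).symm
      calc ∑ j, w j * ∏ i, (v j) i ^ α i
          = A f := by
            rw [hA]
            apply Finset.sum_congr rfl
            intro j _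
            rw [hmon (v j)]
        _ = B f := hfe f
        _ = ∫ x, ∏ i, (x i : ℝ) ^ α i ∂σ := by
            rw [hB]
            exact integral_congr_ae (Filter.Eventually.of_forall fun x => (hmon x).symm)
    calc ∑ j, w j * MvPolynomial.eval (fun i => v j i) p
        = ∑ j, w j * ∑ α ∈ p.support, MvPolynomial.coeff α p * ∏ i, (v j) i ^ α i := by
          apply Finset.sum_congr rfl
          intro j _
          rw [MvPolynomial.eval_eq']
      _ = ∑ j, ∑ α ∈ p.support, MvPolynomial.coeff α p * (w j * ∏ i, (v j) i ^ α i) := by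
          apply Finset.sum_congr rfl; intro j _
          rw [Finset.mul_sum]
          apply Finset.sum_congr rfl; intro α _
          ring
      _ = ∑ α ∈ p.support, ∑ j, MvPolynomial.coeff α p * (w j * ∏ i, (v j) i ^ α i) :=
          Finset.sum_comm
      _ = ∑ α ∈ p.support, MvPolynomial.coeff α p * ∫ x, ∏ i, (x i : ℝ) ^ α i ∂σ := by
          apply Finset.sum_congr rfl
          intro α hα
          rw [← Finset.mul_sum, hmono α hα]
      _ = ∑ α ∈ p.support, ∫ x, MvPolynomial.coeff α p * ∏ i, (x i : ℝ) ^ α i ∂σ := by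
          apply Finset.sum_congr rfl
          intro α hα
          rw [MeasureTheory.integral_const_mul]
      _ = ∫ x, ∑ α ∈ p.support, MvPolynomial.coeff α p * ∏ i, (x i : ℝ) ^ α i ∂σ :=
          (integral_finset_sum _ fun (α : Fin d →₀ ℕ) _ =>
            (integrable_mon hsupp (fun i => α i)).const_mul _).symm
      _ = ∫ x, MvPolynomial.eval (fun i => x i) p ∂σ := by
          apply integral_congr_ae
          apply Filter.Eventually.of_forall
          intro x
          show _ = MvPolynomial.eval (fun i => x i) p
          rw [MvPolynomial.eval_eq']
  · -- design → equality
    intro hdes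
    have hfe : ∀ f : Fin m → Fin d, A f = B f := by
      intro f
      have hhom : (∏ i : Fin m, MvPolynomial.X (f i) : MvPolynomial (Fin d) ℝ).IsHomogeneous m := by
        have := MvPolynomial.IsHomogeneous.prod Finset.univ
          (fun i : Fin m => (MvPolynomial.X (f i) : MvPolynomial (Fin d) ℝ))
          (fun _ => 1) (fun i _ => MvPolynomial.isHomogeneous_X _ _)
        simpa using this
      have hd2 := hdes _ hhom
      have hev : ∀ y : EuclideanSpace ℝ (Fin d),
          MvPolynomial.eval (fun i => y i) (∏ i : Fin m, MvPolynomial.X (f i))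
          = ∏ i, y (f i) := by
        intro y
        rw [map_prod]
        simp [MvPolynomial.eval_X]
      rw [hA, hB]
      calc ∑ j, w j * ∏ i, (v j) (f i)
          = ∑ j, w j * MvPolynomial.eval (fun i => v j i) (∏ i : Fin m, MvPolynomial.X (f i)) := by
            apply Finset.sum_congr rfl; intro j _; rw [hev (v j)]
        _ = ∫ x, MvPolynomial.eval (fun i => x i) (∏ i : Fin m, MvPolynomial.X (f i)) ∂σ := hd2
        _ = ∫ x, ∏ i, x (f i) ∂σ :=
            integral_congr_ae (Filter.Eventually.of_forall fun x => hev x)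
    have hz : ∑ f : Fin m → Fin d, (A f - B f)^2 = 0 :=
      Finset.sum_eq_zero fun f _ => by rw [hfe f]; ring
    linarith [hkey]
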